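/- Let λ₁, λ₂ be nonzero reals with λ₂ ≠ 3λ₁ and suppose p₁, p₂, p₃ are pairwise distinct reals with ζ = p₁+p₂+p₃ ≠ 0, η = p₁²+p₂²+p₃². Suppose φ: I → (0,∞) satisfies the type (III) generalized Kasner Einstein system (66a)-(66d) with Einstein constant α (fibers 1-dimensional, so α₁=α₂=α₃=0) and φ is nonconstant. Then α = 0, η/ζ² = (3λ₁²−λ₂²)/(3λ₁−λ₂)², and φ(t) = c·e^{((3λ₁−λ₂)/ζ)t} for some constant c > 0. -/

import Mathlib

open Set Real

/-- Type (III) generalized Kasner Einstein system.  Let `λ₁, λ₂ ≠ 0` with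
`λ₂ ≠ 3λ₁`, `p₁, p₂, p₃` pairwise distinct with `ζ = p₁+p₂+p₃ ≠ 0`,
`η = p₁²+p₂²+p₃²`, and let `φ : I → (0,∞)` be a nonconstant solution of the system
(66a)-(66d) with Einstein constant `α`:
`ζ(λ₂φ'/φ − φ''/φ) − (η−ζ)(φ')²/φ² + 3(λ₁²−λ₁λ₂) = α`, and for each `i`:
`−p_i[φ''/φ + (ζ−1)(φ')²/φ² + (λ₂−3λ₁)φ'/φ] + λ₂ζφ'/φ = α − λ₂² + 3λ₁λ₂`.
Then `α = 0`, `η/ζ² = (3λ₁²−λ₂²)/(3λ₁−λ₂)²`, and `φ(t) = c e^{((3λ₁−λ₂)/ζ)t}` for some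
`c > 0`. -/
theorem Kasner_typeIII_Einstein_nonconstant
    (l1 l2 : ℝ) (hl1 : l1 ≠ 0) (hl2 : l2 ≠ 0) (hne : l2 ≠ 3 * l1)
    (p₁ p₂ p₃ : ℝ) (h12 : p₁ ≠ p₂) (h23 : p₂ ≠ p₃) (h13 : p₁ ≠ p₃)
    (a b : ℝ) (hab : a < b)
    (ζ η : ℝ) (hζdef : ζ = p₁ + p₂ + p₃) (hηdef : η = p₁ ^ 2 + p₂ ^ 2 + p₃ ^ 2)
    (hζ : ζ ≠ 0)
    (φ : ℝ → ℝ) (hφpos : ∀ t ∈ Ioo a b, 0 < φ t) (hφ : ContDiffOn ℝ 2 φ (Ioo a b))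
    (α : ℝ)
    -- (66a)
    (h66a : ∀ t ∈ Ioo a b,
      ζ * (l2 * deriv φ t / φ t - deriv (deriv φ) t / φ t)
        - (η - ζ) * (deriv φ t) ^ 2 / (φ t) ^ 2 + 3 * (l1 ^ 2 - l1 * l2) = α)
    -- (66b)-(66d)
    (h66bcd : ∀ pi ∈ ({p₁, p₂, p₃} : Set ℝ), ∀ t ∈ Ioo a b,
      -pi * (deriv (deriv φ) t / φ t + (ζ - 1) * (deriv φ t) ^ 2 / (φ t) ^ 2
          + (l2 - 3 * l1) * deriv φ t / φ t)
        + l2 * ζ * deriv φ t / φ t = α - l2 ^ 2 + 3 * l1 * l2)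
    -- φ is nonconstant on I
    (hnonconst : ∃ t₁ ∈ Ioo a b, ∃ t₂ ∈ Ioo a b, φ t₁ ≠ φ t₂) :
    α = 0 ∧
    η / ζ ^ 2 = (3 * l1 ^ 2 - l2 ^ 2) / (3 * l1 - l2) ^ 2 ∧
    ∃ c : ℝ, 0 < c ∧ ∀ t ∈ Ioo a b, φ t = c * exp (((3 * l1 - l2) / ζ) * t) := by
  have hopen : IsOpen (Ioo a b) := isOpen_Ioo
  have hdiff : ∀ t ∈ Ioo a b, DifferentiableAt ℝ φ t := fun t ht =>
    (hφ.differentiableOn (by norm_num)).differentiableAt (hopen.mem_nhds ht)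
  obtain ⟨K, hKdef⟩ : ∃ K : ℝ, K = (α - l2 ^ 2 + 3 * l1 * l2) / (l2 * ζ) := ⟨_, rfl⟩
  -- X = 0
  have hX : ∀ t ∈ Ioo a b,
      deriv (deriv φ) t / φ t + (ζ - 1) * (deriv φ t) ^ 2 / (φ t) ^ 2
        + (l2 - 3 * l1) * deriv φ t / φ t = 0 := by
    intro t ht
    have h1 := h66bcd p₁ (by simp) t ht
    have h2 := h66bcd p₂ (by simp) t ht
    set X := deriv (deriv φ) t / φ t + (ζ - 1) * (deriv φ t) ^ 2 / (φ t) ^ 2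
        + (l2 - 3 * l1) * deriv φ t / φ t with hXd
    have h3 : (p₂ - p₁) * X = 0 := by linear_combination h1 - h2
    rcases mul_eq_zero.mp h3 with h | h
    · exact absurd (sub_eq_zero.mp h).symm h12
    · exact h
  -- φ' = K φ
  have hK : ∀ t ∈ Ioo a b, deriv φ t = K * φ t := by
    intro t ht
    have h1 := h66bcd p₁ (by simp) t ht
    have hx := hX t ht
    have hφt : φ t ≠ 0 := (hφpos t ht).ne'
    have h2 : l2 * ζ * deriv φ t / φ t = α - l2 ^ 2 + 3 * l1 * l2 := by
      rw [hx] at h1; linarith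
    rw [div_eq_iff hφt] at h2
    rw [hKdef]
    field_simp
    linear_combination h2
  -- φ'' = K φ'
  have hK2 : ∀ t ∈ Ioo a b, deriv (deriv φ) t = K * deriv φ t := by
    intro t ht
    have hev : deriv φ =ᶠ[nhds t] fun s => K * φ s := by
      filter_upwards [hopen.mem_nhds ht] with s hs using hK s hs
    rw [hev.deriv_eq, deriv_const_mul _ (hdiff t ht)]
  obtain ⟨t₁, ht₁, t₂, ht₂, hneq⟩ := hnonconst
  have hφt : φ t₁ ≠ 0 := (hφpos t₁ ht₁).ne'
  -- ζ K² = (3 l1 - l2) K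
  have hKeq : ζ * K ^ 2 = (3 * l1 - l2) * K := by
    have hx := hX t₁ ht₁
    rw [hK t₁ ht₁, hK2 t₁ ht₁, hK t₁ ht₁] at hx
    field_simp at hx
    have h4 : (ζ * K ^ 2 - (3 * l1 - l2) * K) * φ t₁ ^ 4 = 0 := by
      linear_combination φ t₁ ^ 4 * hx
    rcases mul_eq_zero.mp h4 with h | h
    · linarith
    · exact absurd h (pow_ne_zero 4 hφt)
  -- exponential representation
  have hexp : ∀ t ∈ Ioo a b, φ t = (φ t₁ * exp (-K * t₁)) * exp (K * t) := by
    have hg : ∀ t ∈ Ioo a b, HasDerivAt (fun s => φ s * exp (-K * s)) 0 t := by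
      intro t ht
      have h1 : HasDerivAt φ (deriv φ t) t := (hdiff t ht).hasDerivAt
      have h2 : HasDerivAt (fun s => exp (-K * s)) (-K * exp (-K * t)) t := by
        simpa [mul_comm] using ((hasDerivAt_id t).const_mul (-K)).exp
      have h3 := h1.mul h2
      have hkt := hK t ht
      have h4 : deriv φ t * exp (-K * t) + φ t * (-K * exp (-K * t)) = 0 := by rw [hkt]; ring
      rw [h4] at h3; exact h3
    have hconst : ∀ t ∈ Ioo a b,
        φ t * exp (-K * t) = φ t₁ * exp (-K * t₁) := by
      intro t ht
      refine (convex_Ioo a b).is_const_of_fderivWithin_eq_zero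
        (fun s hs => ((hg s hs).differentiableAt).differentiableWithinAt)
        (fun s hs => ?_) ht ht₁
      rw [fderivWithin_of_isOpen hopen hs, (hg s hs).hasFDerivAt.fderiv]
      ext; simp
    intro t ht
    have h2 : exp (-K * t) * exp (K * t) = 1 := by
      rw [← Real.exp_add]; ring_nf; exact Real.exp_zero
    calc φ t = φ t * exp (-K * t) * exp (K * t) := by
          rw [mul_assoc, h2, mul_one]
      _ = (φ t₁ * exp (-K * t₁)) * exp (K * t) := by rw [hconst t ht]
  -- K ≠ 0
  have hK0 : K ≠ 0 := by
    intro h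
    apply hneq
    rw [hexp t₁ ht₁, hexp t₂ ht₂, h]
    simp
  have hKval : K = (3 * l1 - l2) / ζ := by
    have h : K * (ζ * K - (3 * l1 - l2)) = 0 := by linear_combination hKeq
    rcases mul_eq_zero.mp h with h | h
    · exact absurd h hK0
    · rw [eq_div_iff hζ]; linarith [sub_eq_zero.mp h]
  have h3l : 3 * l1 - l2 ≠ 0 := fun h => hne (by linarith)
  -- α = 0
  have hα : α = 0 := by
    have h1 : (α - l2 ^ 2 + 3 * l1 * l2) / (l2 * ζ) = (3 * l1 - l2) / ζ := hKdef ▸ hKval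
    rw [div_eq_div_iff (mul_ne_zero hl2 hζ) hζ] at h1
    have h2 : α * ζ = 0 := by linear_combination h1
    exact (mul_eq_zero.mp h2).resolve_right hζ
  -- η relation
  have hη : η / ζ ^ 2 = (3 * l1 ^ 2 - l2 ^ 2) / (3 * l1 - l2) ^ 2 := by
    have ha := h66a t₁ ht₁
    rw [hK t₁ ht₁, hK2 t₁ ht₁, hK t₁ ht₁, hα] at ha
    have hEq : η * K ^ 2 = ζ * l2 * K + 3 * l1 ^ 2 - 3 * l1 * l2 := by
      field_simp at ha
      have h7 : (η * K ^ 2 - ζ * l2 * K - 3 * l1 ^ 2 + 3 * l1 * l2) * φ t₁ ^ 3 = 0 := by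
        linear_combination -φ t₁ ^ 3 * ha
      rcases mul_eq_zero.mp h7 with h | h
      · linarith
      · exact absurd h (pow_ne_zero 3 hφt)
    rw [hKval] at hEq
    field_simp at hEq
    rw [div_eq_div_iff (pow_ne_zero 2 hζ) (pow_ne_zero 2 h3l)]
    have h2 : (η * (3 * l1 - l2) ^ 2 - (3 * l1 ^ 2 - l2 ^ 2) * ζ ^ 2) * ζ = 0 := by
      linear_combination ζ * hEq
    rcases mul_eq_zero.mp h2 with h | h
    · linarith
    · exact absurd h hζ
  refine ⟨hα, hη, φ t₁ * exp (-K * t₁),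
    mul_pos (hφpos t₁ ht₁) (exp_pos _), fun t ht => ?_⟩
  rw [hexp t ht, hKval]
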